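/- arXiv:2311.17385 — 3 statements merged into one kernel-verified Lean document; each statement's English description precedes it below -/
import Mathlib

section
/- Let q ∈ k with q ≠ 0, q ≠ 1, q ≠ −1, and let a, b, c, d ∈ k with ad − bc ≠ 0. Suppose (c·x + d·y)(a·x + b·y) = q·(a·x + b·y)(c·x + d·y) holds in the quantum plane k_q⟨x,y⟩ = k⟨x,y⟩/(yx − qxy). Then b = 0 and c = 0. -/
/-- The defining relation of the quantum plane `k_q⟨x,y⟩ = k⟨x,y⟩/(yx − q·xy)`. -/
inductive QuantumPlaneRel (k : Type*) [Field k] (q : k) :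
    FreeAlgebra k (Fin 2) → FreeAlgebra k (Fin 2) → Prop
  | rel : QuantumPlaneRel k q (FreeAlgebra.ι k 1 * FreeAlgebra.ι k 0)
      (q • (FreeAlgebra.ι k 0 * FreeAlgebra.ι k 1))

noncomputable def qpHom {k : Type*} [Field k] (q : k) {B : Type*} [Ring B] [Algebra k B]
    (X Y : B) (h : Y * X = q • (X * Y)) :
    RingQuot (QuantumPlaneRel k q) →ₐ[k] B :=
  RingQuot.liftAlgHom k ⟨FreeAlgebra.lift k ![X, Y], by
    rintro _ _ ⟨⟩
    simp [h]⟩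

theorem qpHom_x {k : Type*} [Field k] (q : k) {B : Type*} [Ring B] [Algebra k B]
    (X Y : B) (h : Y * X = q • (X * Y)) :
    qpHom q X Y h (RingQuot.mkAlgHom k (QuantumPlaneRel k q) (FreeAlgebra.ι k 0)) = X := by
  simp [qpHom, RingQuot.liftAlgHom_mkAlgHom_apply]

theorem qpHom_y {k : Type*} [Field k] (q : k) {B : Type*} [Ring B] [Algebra k B]
    (X Y : B) (h : Y * X = q • (X * Y)) :
    qpHom q X Y h (RingQuot.mkAlgHom k (QuantumPlaneRel k q) (FreeAlgebra.ι k 1)) = Y := by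
  simp [qpHom, RingQuot.liftAlgHom_mkAlgHom_apply]

/-- In the quantum plane with `q ≠ 0, ±1`, if
`(cx + dy)(ax + by) = q·(ax + by)(cx + dy)` with `ad − bc ≠ 0`, then `b = c = 0`. -/
theorem stmt_13 {k : Type*} [Field k] [CharZero k] (q a b c d : k)
    (hq0 : q ≠ 0) (hq1 : q ≠ 1) (hqm1 : q ≠ -1) (hdet : a * d - b * c ≠ 0)
    (x y : RingQuot (QuantumPlaneRel k q))
    (hx : x = RingQuot.mkAlgHom k (QuantumPlaneRel k q) (FreeAlgebra.ι k 0))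
    (hy : y = RingQuot.mkAlgHom k (QuantumPlaneRel k q) (FreeAlgebra.ι k 1))
    (hrel : (c • x + d • y) * (a • x + b • y) = q • ((a • x + b • y) * (c • x + d • y))) :
    b = 0 ∧ c = 0 := by
  have h1 : (!![0,1;0,0] : Matrix (Fin 2) (Fin 2) k) * !![1,0;0,q]
      = q • (!![1,0;0,q] * !![0,1;0,0]) := by
    ext i j
    fin_cases i <;> fin_cases j <;>
      simp [Matrix.mul_apply, Fin.sum_univ_two]
  have h2 : (!![q,0;0,1] : Matrix (Fin 2) (Fin 2) k) * !![0,1;0,0]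
      = q • (!![0,1;0,0] * !![q,0;0,1]) := by
    ext i j
    fin_cases i <;> fin_cases j <;>
      simp [Matrix.mul_apply, Fin.sum_univ_two]
  have e1 := congrArg (qpHom q _ _ h1) hrel
  rw [hx, hy] at e1
  simp only [map_mul, map_add, map_smul, qpHom_x, qpHom_y] at e1
  have e2 := congrArg (qpHom q _ _ h2) hrel
  rw [hx, hy] at e2
  simp only [map_mul, map_add, map_smul, qpHom_x, qpHom_y] at e2
  have e1_00 := (Matrix.ext_iff.2 e1) 0 0
  have e1_01 := (Matrix.ext_iff.2 e1) 0 1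
  have e2_11 := (Matrix.ext_iff.2 e2) 1 1
  simp [Matrix.mul_apply, Fin.sum_univ_two] at e1_00 e1_01 e2_11
  have hq1' : (1 : k) - q ≠ 0 := sub_ne_zero.2 (Ne.symm hq1)
  have hqm1' : (1 : k) + q ≠ 0 := by
    intro h; exact hqm1 (by linear_combination h)
  have hac : a * c = 0 := by
    have hE : (1 - q) * (a * c) = 0 := by linear_combination e1_00
    exact (mul_eq_zero.mp hE).resolve_left hq1'
  have hbc : b * c = 0 := by
    have hE : (1 - q) * ((1 + q) * (b * c)) = 0 := by linear_combination e1_01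
    rcases mul_eq_zero.mp hE with h | h
    · exact absurd h hq1'
    · exact (mul_eq_zero.mp h).resolve_left hqm1'
  have hbd : b * d = 0 := by
    have hE : (1 - q) * (b * d) = 0 := by linear_combination e2_11
    exact (mul_eq_zero.mp hE).resolve_left hq1'
  have had : a * d ≠ 0 := by
    intro h; apply hdet; rw [h, hbc, sub_zero]
  have ha : a ≠ 0 := fun h => had (by rw [h, zero_mul])
  have hd : d ≠ 0 := fun h => had (by rw [h, mul_zero])
  exact ⟨(mul_eq_zero.mp hbd).resolve_right hd, (mul_eq_zero.mp hac).resolve_left ha⟩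
end

section
/- Let k be a field of characteristic 0 and a, b, c, d ∈ k with ad − bc ≠ 0. Suppose (c·x + d·y)(a·x + b·y) − (a·x + b·y)(c·x + d·y) = (a·x + b·y)² holds in the Jordan plane k⟨x,y⟩/(yx − xy − x²). Then b = 0 and a = d. -/
/-- The defining relation of the Jordan plane `k⟨x,y⟩/(yx − xy − x²)`. -/
inductive JordanPlaneRel (k : Type*) [Field k] :
    FreeAlgebra k (Fin 2) → FreeAlgebra k (Fin 2) → Prop
  | rel : JordanPlaneRel k (FreeAlgebra.ι k 1 * FreeAlgebra.ι k 0)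
      (FreeAlgebra.ι k 0 * FreeAlgebra.ι k 1 + FreeAlgebra.ι k 0 * FreeAlgebra.ι k 0)

/-- Multiplication by `X` on `k[X]`, the image of `x` in our representation. -/
noncomputable def opX (k : Type*) [Field k] : Module.End k (Polynomial k) :=
  LinearMap.mulLeft k Polynomial.X

/-- The operator `X² d/dX` on `k[X]`, the image of `y` in our representation. -/
noncomputable def opY (k : Type*) [Field k] : Module.End k (Polynomial k) :=
  (LinearMap.mulLeft k (Polynomial.X ^ 2)) ∘ₗ
    (Polynomial.derivative : Polynomial k →ₗ[k] Polynomial k)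

/-- The representation of the free algebra on `k[X]`. -/
noncomputable def Frep (k : Type*) [Field k] :
    FreeAlgebra k (Fin 2) →ₐ[k] Module.End k (Polynomial k) :=
  FreeAlgebra.lift k ![opX k, opY k]

lemma Frep_pres (k : Type*) [Field k] :
    ∀ ⦃u v : FreeAlgebra k (Fin 2)⦄, JordanPlaneRel k u v → Frep k u = Frep k v := by
  rintro u v ⟨⟩
  simp only [map_mul, map_add, Frep, FreeAlgebra.lift_ι_apply]
  show opY k * opX k = opX k * opY k + opX k * opX k
  apply LinearMap.ext
  intro p
  simp [opX, opY, Module.End.mul_apply, Polynomial.derivative_mul]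
  ring

/-- The representation of the Jordan plane on `k[X]`. -/
noncomputable def phiRep (k : Type*) [Field k] :
    RingQuot (JordanPlaneRel k) →ₐ[k] Module.End k (Polynomial k) :=
  RingQuot.liftAlgHom k ⟨Frep k, Frep_pres k⟩

/-- In the Jordan plane, if `(cx + dy)(ax + by) − (ax + by)(cx + dy) = (ax + by)²`
with `ad − bc ≠ 0`, then `b = 0` and `a = d`. -/
theorem stmt_14 {k : Type*} [Field k] [CharZero k] (a b c d : k)
    (hdet : a * d - b * c ≠ 0)
    (x y : RingQuot (JordanPlaneRel k))
    (hx : x = RingQuot.mkAlgHom k (JordanPlaneRel k) (FreeAlgebra.ι k 0))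
    (hy : y = RingQuot.mkAlgHom k (JordanPlaneRel k) (FreeAlgebra.ι k 1))
    (hrel : (c • x + d • y) * (a • x + b • y) - (a • x + b • y) * (c • x + d • y)
      = (a • x + b • y) ^ 2) :
    b = 0 ∧ a = d := by
  classical
  open Polynomial in
  have hφx : phiRep k x = opX k := by
    rw [hx, phiRep, RingQuot.liftAlgHom_mkAlgHom_apply, Frep, FreeAlgebra.lift_ι_apply]
    rfl
  have hφy : phiRep k y = opY k := by
    rw [hy, phiRep, RingQuot.liftAlgHom_mkAlgHom_apply, Frep, FreeAlgebra.lift_ι_apply]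
    rfl
  have hrel' : (c • opX k + d • opY k) * (a • opX k + b • opY k)
      - (a • opX k + b • opY k) * (c • opX k + d • opY k)
      = (a • opX k + b • opY k) ^ 2 := by
    have := congrArg (phiRep k) hrel
    simpa [map_sub, map_mul, map_add, map_smul, map_pow, hφx, hφy] using this
  have ev : ∀ p : Polynomial k,
      (c • opX k + d • opY k) ((a • opX k + b • opY k) p)
      - (a • opX k + b • opY k) ((c • opX k + d • opY k) p)
      = (a • opX k + b • opY k) ((a • opX k + b • opY k) p) := by
    intro p
    have := LinearMap.congr_fun hrel' p
    simpa [Module.End.mul_apply, pow_two] using this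
  -- Equation from evaluating at 1 (coefficient of X²):
  have h1 : c * a + d * a - (a * c + b * c) = a ^ 2 + b * a := by
    have e1 := ev 1
    simp only [opX, opY, LinearMap.add_apply, LinearMap.smul_apply, LinearMap.mulLeft_apply,
      LinearMap.comp_apply, Polynomial.derivative_one, Polynomial.derivative_X, mul_one,
      Polynomial.derivative_mul, Polynomial.derivative_smul, smul_add, mul_zero, smul_zero,
      add_zero, zero_add, smul_smul, mul_smul_comm, ← pow_two] at e1
    have h := congrArg (fun p => Polynomial.coeff p 2) e1
    simpa [Polynomial.coeff_X_pow] using h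
  -- Equation from evaluating at X (coefficient of X³):
  have h2 : c * a + d * a * 2 + (c * b + d * b * 2)
      - (a * c + b * c * 2 + (a * d + b * d * 2))
      = a ^ 2 + b * a * 2 + (a * b + b ^ 2 * 2) := by
    have e2 := ev Polynomial.X
    have hx3 : (X ^ 2 * (C (2:k) * X)) = C 2 * X ^ 3 := by ring
    simp only [opX, opY, LinearMap.add_apply, LinearMap.smul_apply, LinearMap.mulLeft_apply,
      LinearMap.comp_apply, Polynomial.derivative_one, Polynomial.derivative_X, mul_one,
      map_add, Polynomial.derivative_smul, Polynomial.derivative_X_pow, smul_add,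
      mul_zero, smul_zero, add_zero, zero_add, smul_smul, mul_smul_comm, ← pow_two] at e2
    have h := congrArg (fun p => Polynomial.coeff p 3) e2
    simpa [hx3, Polynomial.coeff_X_pow, mul_add, mul_smul_comm] using h
  -- Equation from evaluating at X² (coefficient of X⁴):
  have h3 : c * a + (d * a + d * a * 2) + (c * b * 2 + (d * b * (2 * 2) + d * b * 2))
      - (a * c + (b * c + b * c * 2) + (a * d * 2 + (b * d * (2 * 2) + b * d * 2)))
      = a * a + (b * a + b * a * 2) + (a * b * 2 + (b * b * (2 * 2) + b * b * 2)) := by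
    have e3 := ev (Polynomial.X ^ 2)
    simp only [opX, opY, LinearMap.add_apply, LinearMap.smul_apply, LinearMap.mulLeft_apply,
      LinearMap.comp_apply, map_add, Polynomial.derivative_smul, Polynomial.derivative_X_pow,
      Polynomial.derivative_mul, Polynomial.derivative_C, Polynomial.derivative_X,
      smul_add, mul_add, add_zero, zero_add, zero_mul, mul_zero, smul_zero, mul_one,
      smul_smul, mul_smul_comm] at e3
    have h := congrArg (fun p => Polynomial.coeff p 4) e3
    have g1 : (X ^ 2 * X ^ 2 : Polynomial k) = X ^ 4 := by ring
    have g2 : (X ^ 2 * (X * (C (2:k) * X))) = C 2 * X ^ 4 := by ring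
    have g3 : (X ^ 2 * (C (2:k) * X)) = C 2 * X ^ 3 := by ring
    have g4 : (X ^ 2 * (C (2:k) * X * (C 2 * X))) = C 2 * (C 2 * X ^ 4) := by ring
    have g5 : (X ^ 2 * (C (2:k) * X ^ 2)) = C 2 * X ^ 4 := by ring
    have g6 : (X * (X * X ^ 2) : Polynomial k) = X ^ 4 := by ring
    have g7 : (X * (X ^ 2 * (C (2:k) * X))) = C 2 * X ^ 4 := by ring
    simpa [g1, g2, g3, g4, g5, g6, g7, Polynomial.coeff_X_pow, mul_add] using h
  have hb2 : b ^ 2 = 0 := by linear_combination h2 - h1 / 2 - h3 / 2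
  have hb : b = 0 := by
    exact pow_eq_zero_iff (two_ne_zero) |>.mp hb2
  have ha : a ≠ 0 := by
    intro h0
    exact hdet (by rw [h0, hb]; ring)
  have hda : (d - a) * a = 0 := by
    subst hb
    linear_combination h1
  rcases mul_eq_zero.mp hda with h | h
  · exact ⟨hb, (sub_eq_zero.mp h).symm⟩
  · exact absurd h ha
end

section
/- Equip P = k[x1,x2,x3] with the Poisson bracket {x1,x2} = x1x2, {x2,x3} = 3x1² + 2x1x2 + x2x3, {x3,x1} = x1² + x1x3 (superpotential Ω = x1³ + x1²x2 + x1x2x3). Set w1 = x2, w2 = x1 + x3, w3 = x1². Then {w1,w2} = w1w2 + 3w3, {w2,w3} = 2w2w3, {w3,w1} = 2w3w1, and each of w1, w2, w3 is invariant under the algebra automorphism φ: x1 ↦ −x1, x2 ↦ x2, x3 ↦ 2x1 + x3. -/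
open MvPolynomial

/-- The Jacobian Poisson bracket `{f,g} = det Jac(f,g,Ω)` on `k[x₁,x₂,x₃]`. -/
noncomputable def jacBracket {k : Type*} [Field k] (Ω f g : MvPolynomial (Fin 3) k) :
    MvPolynomial (Fin 3) k :=
  pderiv 0 f * (pderiv 1 g * pderiv 2 Ω - pderiv 2 g * pderiv 1 Ω)
  + pderiv 1 f * (pderiv 2 g * pderiv 0 Ω - pderiv 0 g * pderiv 2 Ω)
  + pderiv 2 f * (pderiv 0 g * pderiv 1 Ω - pderiv 1 g * pderiv 0 Ω)

/-- For the bracket with superpotential `Ω = x₁³ + x₁²x₂ + x₁x₂x₃` and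
`w₁ = x₂`, `w₂ = x₁ + x₃`, `w₃ = x₁²`:
`{w₁,w₂} = w₁w₂ + 3w₃`, `{w₂,w₃} = 2w₂w₃`, `{w₃,w₁} = 2w₃w₁`, and all `wᵢ`
are invariant under `φ : x₁ ↦ −x₁, x₂ ↦ x₂, x₃ ↦ 2x₁ + x₃`. -/
theorem stmt_18 {k : Type*} [Field k] [CharZero k] :
    letI Ω : MvPolynomial (Fin 3) k := X 0 ^ 3 + X 0 ^ 2 * X 1 + X 0 * X 1 * X 2
    letI w1 : MvPolynomial (Fin 3) k := X 1
    letI w2 : MvPolynomial (Fin 3) k := X 0 + X 2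
    letI w3 : MvPolynomial (Fin 3) k := X 0 ^ 2
    letI φ : MvPolynomial (Fin 3) k →ₐ[k] MvPolynomial (Fin 3) k :=
      aeval ![-X 0, X 1, 2 * X 0 + X 2]
    jacBracket Ω w1 w2 = w1 * w2 + 3 * w3 ∧
    jacBracket Ω w2 w3 = 2 * (w2 * w3) ∧
    jacBracket Ω w3 w1 = 2 * (w3 * w1) ∧
    φ w1 = w1 ∧ φ w2 = w2 ∧ φ w3 = w3 := by
  refine ⟨?_, ?_, ?_, ?_, ?_, ?_⟩ <;>
    simp [jacBracket, Matrix.cons_val_zero, Matrix.cons_val_one, Matrix.head_cons,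
      pderiv_mul, pderiv_pow, Fin.isValue] <;> ring
end
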